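/- Under the setting of the quasi-reversibility method, the data-propagation error satisfies: if h, h^δ ∈ H with ‖h - h^δ‖ ≤ δ, b ≥ 2, α > 0, |μ_n| ≥ C/λ_n² with λ_n > 0, and f_α, f_α^δ are defined by Fourier coefficients ⟨h, φ_n⟩/((1+αλ_n^b)μ_n) and ⟨h^δ, φ_n⟩/((1+αλ_n^b)μ_n) respectively, then ‖f_α - f_α^δ‖ ≤ δ/(C·α^{2/b}). -/
import Mathlib


open scoped RealInnerProductSpace

theorem stmt_12 {H : Type*} [NormedAddCommGroup H] [InnerProductSpace ℝ H]
    (φ : HilbertBasis ℕ ℝ H) (lam μ : ℕ → ℝ) (C α b δ : ℝ)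
    (hC : 0 < C) (hα : 0 < α) (hb : 2 ≤ b) (hδ : 0 < δ)
    (hlampos : ∀ n, 0 < lam n)
    (hμ : ∀ n, μ n ≠ 0) (hμlow : ∀ n, C / (lam n) ^ 2 ≤ |μ n|)
    (h hδ' fα fαδ : H)
    (hnoise : ‖h - hδ'‖ ≤ δ)
    (hfα : ∀ n, ⟪fα, φ n⟫ = ⟪h, φ n⟫ / ((1 + α * (lam n) ^ b) * μ n))
    (hfαδ : ∀ n, ⟪fαδ, φ n⟫ = ⟪hδ', φ n⟫ / ((1 + α * (lam n) ^ b) * μ n)) :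
    ‖fα - fαδ‖ ≤ δ / (C * α ^ (2 / b)) := by
  set e := h - hδ' with he
  set x := fα - fαδ with hxdef
  set K := C * α ^ (2 / b) with hK
  have hKpos : 0 < K := mul_pos hC (Real.rpow_pos_of_pos hα _)
  have hb0 : (0:ℝ) < b := by linarith
  have hD : ∀ n, K ≤ |(1 + α * (lam n) ^ b) * μ n| := by
    intro n
    have hl := hlampos n
    have hlb : 0 < (lam n) ^ b := Real.rpow_pos_of_pos hl b
    have h1 : 0 < 1 + α * lam n ^ b := by positivity
    rw [abs_mul, abs_of_pos h1]
    have key : α ^ (2/b) * (lam n)^2 ≤ 1 + α * lam n ^ b := by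
      have ht : 0 < α * lam n ^ b := by positivity
      have heq : α ^ (2/b) * (lam n)^2 = (α * lam n ^ b) ^ (2/b) := by
        rw [Real.mul_rpow (le_of_lt hα) hlb.le, ← Real.rpow_natCast (lam n) 2,
          ← Real.rpow_mul hl.le]
        congr 2
        push_cast
        field_simp
      rw [heq]
      rcases le_total (α * lam n ^ b) 1 with hle | hge
      · have : (α * lam n ^ b) ^ (2/b) ≤ 1 :=
          Real.rpow_le_one ht.le hle (by positivity)
        linarith
      · have h2b : 2/b ≤ 1 := by rw [div_le_one hb0]; linarith
        have := Real.rpow_le_rpow_of_exponent_le hge h2b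
        rw [Real.rpow_one] at this
        linarith
    have hmu := hμlow n
    have step : K ≤ (1 + α * lam n ^ b) * (C / (lam n)^2) := by
      rw [hK, mul_comm (1 + α * lam n ^ b), div_mul_eq_mul_div, le_div_iff₀ (by positivity)]
      nlinarith [key]
    exact step.trans (mul_le_mul_of_nonneg_left hmu h1.le)
  have hx : ∀ n, ⟪x, φ n⟫ = ⟪e, φ n⟫ / ((1 + α * (lam n) ^ b) * μ n) := by
    intro n
    simp [hxdef, he, inner_sub_left, hfα, hfαδ, sub_div]
  have hsx : HasSum (fun n => ⟪x, φ n⟫ * ⟪φ n, x⟫) ⟪x, x⟫ :=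
    φ.hasSum_inner_mul_inner x x
  have hse : HasSum (fun n => (1 / K^2) * (⟪e, φ n⟫ * ⟪φ n, e⟫)) ((1 / K^2) * ⟪e, e⟫) :=
    (φ.hasSum_inner_mul_inner e e).mul_left _
  have hcomp : ∀ n, ⟪x, φ n⟫ * ⟪φ n, x⟫ ≤ (1 / K^2) * (⟪e, φ n⟫ * ⟪φ n, e⟫) := by
    intro n
    have hDsq : K^2 ≤ ((1 + α * (lam n) ^ b) * μ n)^2 := by
      have := pow_le_pow_left₀ hKpos.le (hD n) 2
      rwa [sq_abs] at this
    rw [show ⟪φ n, x⟫ = ⟪x, φ n⟫ from real_inner_comm _ _,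
      show ⟪φ n, e⟫ = ⟪e, φ n⟫ from real_inner_comm _ _, hx n, div_mul_div_comm]
    rw [one_div, ← div_eq_inv_mul]
    exact div_le_div_of_nonneg_left (mul_self_nonneg _) (by positivity) (by nlinarith [hDsq])
  have hle : ⟪x, x⟫ ≤ (1 / K^2) * ⟪e, e⟫ := hasSum_le hcomp hsx hse
  rw [real_inner_self_eq_norm_sq, real_inner_self_eq_norm_sq] at hle
  have hle2 : ‖x‖^2 ≤ (δ / K)^2 := by
    have h1 : ‖e‖^2 ≤ δ^2 := pow_le_pow_left₀ (norm_nonneg _) hnoise 2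
    rw [div_pow]
    calc ‖x‖^2 ≤ (1 / K^2) * ‖e‖^2 := hle
      _ ≤ (1 / K^2) * δ^2 := by
          exact mul_le_mul_of_nonneg_left h1 (by positivity)
      _ = δ^2 / K^2 := by ring
  have hxn : ‖x‖ ≤ δ / K := by
    nlinarith [norm_nonneg x, div_nonneg hδ.le hKpos.le]
  exact hxn
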